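/- Let (X,d,μ) be a metric measure space and x ∈ X a point whose closed unit ball B̄₁(x) is compact. Let n be a positive integer, ω > 0, c ∈ ℝ, and S : X → ℝ a continuous function, and suppose there exist r₀ ∈ (0,1) and C > 0 such that |μ(B_r(y)) − ω rⁿ (1 − c·S(y)·r²)| ≤ C rⁿ⁺⁴ for every y ∈ B̄₁(x) and every r ∈ (0,r₀). Then: (i) sup_{y ∈ B_r(x)} |1 − μ(B_r(x))/μ(B_r(y))| = O(r²) as r ↓ 0; (ii) μ(B_{2r}(x))/μ(B_r(x)) → 2ⁿ as r ↓ 0. Consequently, for every u ∈ L¹_loc(X,μ) such that x is a Lebesgue point of u, |Δ_{μ,r}u(x) − Δ̃_{μ,r}u(x)| → 0 as r ↓ 0. -/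

import Mathlib

open MeasureTheory Filter Metric Set
open scoped ENNReal Topology

theorem lsc_measure_ball {X : Type*} [MetricSpace X] [MeasurableSpace X]
    (μ : Measure X) (r : ℝ) : LowerSemicontinuous fun y : X => μ (ball y r) := by
  intro y a ha
  simp only at ha ⊢
  rcases le_or_gt r 0 with h | h
  · rw [ball_eq_empty.2 h, measure_empty] at ha
    exact absurd ha (by simp)
  · have key : ball y r = ⋃ n : ℕ, ball y (r - r / (n + 2)) := by
      ext z
      simp only [mem_iUnion, mem_ball]
      constructor
      · intro hz
        have hrd : 0 < r - dist z y := by linarith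
        obtain ⟨n, hn⟩ := exists_nat_gt (r / (r - dist z y))
        have hq : 0 < r / (r - dist z y) := by positivity
        refine ⟨n, ?_⟩
        have h1 : r / ((n : ℝ) + 2) < r - dist z y := by
          rw [div_lt_iff₀ (by positivity)]
          have h2 : r / (r - dist z y) * (r - dist z y) = r := by
            field_simp
          nlinarith
        linarith
      · rintro ⟨n, hn⟩
        have : 0 < r / ((n : ℝ) + 2) := by positivity
        linarith
    have hmono : Monotone fun n : ℕ => ball y (r - r / (n + 2)) := by
      intro m k hmk
      apply ball_subset_ball
      have : r / ((k : ℝ) + 2) ≤ r / ((m : ℝ) + 2) := by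
        apply div_le_div_of_nonneg_left h.le (by positivity)
        exact_mod_cast by exact_mod_cast add_le_add_left (Nat.cast_le.2 hmk) 2
      linarith
    rw [key, (hmono.directed_le).measure_iUnion] at ha
    obtain ⟨n, hn⟩ := lt_iSup_iff.1 ha
    have hε : 0 < r / ((n : ℝ) + 2) := by positivity
    filter_upwards [ball_mem_nhds y hε] with z hz
    calc a < μ (ball y (r - r / (n + 2))) := hn
      _ ≤ μ (ball z r) := by
        apply measure_mono
        intro w hw
        simp only [mem_ball] at *
        have := dist_triangle w y z
        have : dist w z ≤ dist w y + dist y z := dist_triangle w y z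
        rw [dist_comm y z] at this
        linarith

theorem measurable_measure_ball' {X : Type*} [MetricSpace X] [MeasurableSpace X]
    [OpensMeasurableSpace X] (μ : Measure X) (r : ℝ) :
    Measurable fun y : X => (μ (ball y r)).toReal :=
  ENNReal.measurable_toReal.comp (lsc_measure_ball μ r).measurable

/-- The AMV `r`-operator at a Lebesgue point `x` with Lebesgue value `c`. -/
noncomputable def amvOp {X : Type*} [MetricSpace X] [MeasurableSpace X]
    (μ : Measure X) (u : X → ℝ) (c : ℝ) (x : X) (r : ℝ) : ℝ :=
  (1 / r ^ 2) * ⨍ y in ball x r, (u y - c) ∂μ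

/-- The SAMV `r`-operator at a Lebesgue point `x` with Lebesgue value `c`. -/
noncomputable def samvOp {X : Type*} [MetricSpace X] [MeasurableSpace X]
    (μ : Measure X) (u : X → ℝ) (c : ℝ) (x : X) (r : ℝ) : ℝ :=
  (1 / (2 * r ^ 2)) *
    ⨍ y in ball x r, (u y - c) * (1 + (μ (ball x r)).toReal / (μ (ball y r)).toReal) ∂μ

/-- (Abstract Riemannian volume expansion.)  Suppose the closed unit ball of
`x` is compact and `|μ(B_r(y)) − ω rⁿ (1 − c S(y) r²)| ≤ C r^{n+4}` for all `y ∈ B̄₁(x)` and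
`r ∈ (0, r₀)`, with `S` continuous.  Then (i) `sup_{y ∈ B_r(x)} |1 − μ(B_r(x))/μ(B_r(y))| = O(r²)`;
(ii) `μ(B_{2r}(x))/μ(B_r(x)) → 2ⁿ`; and consequently at every Lebesgue point `x` of any
`u ∈ L¹_loc`, `|Δ_{μ,r}u(x) − Δ̃_{μ,r}u(x)| → 0` as `r ↓ 0`. -/
theorem stmt_7 {X : Type*} [MetricSpace X] [MeasurableSpace X] [BorelSpace X]
    (μ : Measure X)
    (hμ : ∀ (x : X) (r : ℝ), 0 < r → 0 < μ (ball x r) ∧ μ (ball x r) < ∞)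
    (x : X) (hcpt : IsCompact (closedBall x 1))
    (n : ℕ) (hn : 0 < n) (ω : ℝ) (hω : 0 < ω) (c : ℝ)
    (S : X → ℝ) (hS : Continuous S)
    (r₀ C : ℝ) (hr₀ : 0 < r₀) (hr₀1 : r₀ < 1) (hC : 0 < C)
    (hexp : ∀ y ∈ closedBall x 1, ∀ r : ℝ, 0 < r → r < r₀ →
      |(μ (ball y r)).toReal - ω * r ^ n * (1 - c * S y * r ^ 2)| ≤ C * r ^ (n + 4)) :
    (∃ K r₁ : ℝ, 0 < K ∧ 0 < r₁ ∧ ∀ r : ℝ, 0 < r → r < r₁ → ∀ y ∈ ball x r,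
      |1 - (μ (ball x r)).toReal / (μ (ball y r)).toReal| ≤ K * r ^ 2) ∧
    Tendsto (fun r => (μ (ball x (2 * r))).toReal / (μ (ball x r)).toReal)
      (𝓝[>] (0 : ℝ)) (𝓝 (2 ^ n)) ∧
    ∀ (u : X → ℝ), LocallyIntegrable u μ → ∀ c' : ℝ,
      Tendsto (fun r => ⨍ y in ball x r, |u y - c'| ∂μ) (𝓝[>] (0 : ℝ)) (𝓝 0) →
      Tendsto (fun r => |amvOp μ u c' x r - samvOp μ u c' x r|) (𝓝[>] (0 : ℝ)) (𝓝 0) := by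
  -- bound on S
  obtain ⟨M, hM⟩ := hcpt.exists_bound_of_continuousOn hS.continuousOn
  have hM0 : 0 ≤ M := le_trans (norm_nonneg (S x)) (hM x (mem_closedBall_self zero_le_one))
  set D : ℝ := ω * (|c| * M) + C with hDdef
  have hD : 0 < D := by positivity
  -- key two-sided estimate
  have key : ∀ y ∈ closedBall x 1, ∀ r : ℝ, 0 < r → r < r₀ →
      |(μ (ball y r)).toReal - ω * r ^ n| ≤ D * r ^ (n + 2) := by
    intro y hy r hr hrr
    have h1 := hexp y hy r hr hrr
    have hr1 : r < 1 := hrr.trans hr₀1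
    have hSy : |S y| ≤ M := hM y hy
    have h2 : |ω * r ^ n * (c * S y * r ^ 2)| ≤ ω * |c| * M * r ^ (n + 2) := by
      have h3 : |ω * r ^ n * (c * S y * r ^ 2)| = ω * |c| * |S y| * r ^ (n + 2) := by
        rw [abs_mul, abs_mul, abs_mul, abs_mul, abs_of_pos hω, abs_of_pos (pow_pos hr n),
          abs_of_pos (pow_pos hr 2), pow_add]
        ring
      rw [h3]
      have h4 : (0:ℝ) ≤ r ^ (n + 2) := by positivity
      have := mul_le_mul_of_nonneg_right
        (mul_le_mul_of_nonneg_left hSy (by positivity : (0:ℝ) ≤ ω * |c|)) h4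
      linarith
    have h5 : C * r ^ (n + 4) ≤ C * r ^ (n + 2) :=
      mul_le_mul_of_nonneg_left (pow_le_pow_of_le_one hr.le hr1.le (by omega)) hC.le
    have hdec : (μ (ball y r)).toReal - ω * r ^ n =
        ((μ (ball y r)).toReal - ω * r ^ n * (1 - c * S y * r ^ 2)) +
          (-(ω * r ^ n * (c * S y * r ^ 2))) := by ring
    calc |(μ (ball y r)).toReal - ω * r ^ n|
        ≤ |(μ (ball y r)).toReal - ω * r ^ n * (1 - c * S y * r ^ 2)| +
          |(-(ω * r ^ n * (c * S y * r ^ 2)))| := by rw [hdec]; exact abs_add_le _ _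
      _ ≤ C * r ^ (n + 2) + ω * |c| * M * r ^ (n + 2) := by
          rw [abs_neg]; exact add_le_add (h1.trans h5) h2
      _ = D * r ^ (n + 2) := by rw [hDdef]; ring
  -- choose r₁
  set r₁ : ℝ := min r₀ (Real.sqrt (ω / (2 * D))) with hr₁def
  have hr₁pos : 0 < r₁ := lt_min hr₀ (Real.sqrt_pos.2 (by positivity))
  have hr₁r₀ : r₁ ≤ r₀ := min_le_left _ _
  have hsmall : ∀ r : ℝ, 0 < r → r < r₁ → D * r ^ 2 ≤ ω / 2 := by
    intro r hr hrr
    have : r < Real.sqrt (ω / (2 * D)) := hrr.trans_le (min_le_right _ _)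
    have h2 : r ^ 2 < ω / (2 * D) := (Real.lt_sqrt hr.le).1 this
    have h2' : r ^ 2 * (2 * D) < ω := (lt_div_iff₀ (by positivity)).1 h2
    nlinarith
  clear_value r₁
  clear_value D
  -- lower bound for balls
  have hlow : ∀ y ∈ closedBall x 1, ∀ r : ℝ, 0 < r → r < r₁ →
      ω / 2 * r ^ n ≤ (μ (ball y r)).toReal := by
    intro y hy r hr hrr
    have h1 := key y hy r hr (hrr.trans_le hr₁r₀)
    have h2 := hsmall r hr hrr
    obtain ⟨h3a, h3b⟩ := abs_le.1 h1
    have h4 : r ^ (n + 2) = r ^ n * r ^ 2 := pow_add r n 2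
    rw [h4] at h3a
    nlinarith [pow_pos hr n, pow_pos hr 2,
      mul_le_mul_of_nonneg_right h2 (pow_pos hr n).le]
  set K : ℝ := 4 * D / ω with hKdef
  have hK : 0 < K := by positivity
  clear_value K
  -- claim (i)
  have claimK : ∀ r : ℝ, 0 < r → r < r₁ → ∀ y ∈ ball x r,
      |1 - (μ (ball x r)).toReal / (μ (ball y r)).toReal| ≤ K * r ^ 2 := by
    intro r hr hrr y hy
    have hr1 : r < 1 := lt_of_le_of_lt (hrr.trans_le hr₁r₀).le hr₀1
    have hy1 : y ∈ closedBall x 1 := by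
      have hyx : dist y x < r := mem_ball.1 hy
      exact mem_closedBall.2 (by linarith)
    have hx1 : x ∈ closedBall x 1 := mem_closedBall_self zero_le_one
    have hAy := hlow y hy1 r hr hrr
    have k1 := key x hx1 r hr (hrr.trans_le hr₁r₀)
    have k2 := key y hy1 r hr (hrr.trans_le hr₁r₀)
    have hAypos : 0 < (μ (ball y r)).toReal := lt_of_lt_of_le (by positivity) hAy
    have heq : 1 - (μ (ball x r)).toReal / (μ (ball y r)).toReal =
        ((μ (ball y r)).toReal - (μ (ball x r)).toReal) / (μ (ball y r)).toReal := by
      field_simp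
    rw [heq, abs_div, abs_of_pos hAypos]
    have hnum : |(μ (ball y r)).toReal - (μ (ball x r)).toReal| ≤ 2 * D * r ^ (n + 2) := by
      have hd : (μ (ball y r)).toReal - (μ (ball x r)).toReal =
          ((μ (ball y r)).toReal - ω * r ^ n) - ((μ (ball x r)).toReal - ω * r ^ n) := by ring
      rw [hd]
      calc |((μ (ball y r)).toReal - ω * r ^ n) - ((μ (ball x r)).toReal - ω * r ^ n)|
          ≤ |(μ (ball y r)).toReal - ω * r ^ n| + |(μ (ball x r)).toReal - ω * r ^ n| :=
            abs_sub _ _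
        _ ≤ 2 * D * r ^ (n + 2) := by linarith
    calc |(μ (ball y r)).toReal - (μ (ball x r)).toReal| / (μ (ball y r)).toReal
        ≤ (2 * D * r ^ (n + 2)) / (ω / 2 * r ^ n) :=
          div_le_div₀ (by positivity) hnum (by positivity) hAy
      _ = K * r ^ 2 := by
          rw [hKdef, pow_add]
          field_simp
          ring
  refine ⟨⟨K, r₁, hK, hr₁pos, claimK⟩, ?_, ?_⟩
  · rw [← tendsto_sub_nhds_zero_iff]
    have hbd : ∀ᶠ r in 𝓝[>] (0:ℝ),
        ‖(μ (ball x (2*r))).toReal / (μ (ball x r)).toReal - 2^n‖ ≤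
          (2*D*(2^(n+2)+2^n)/ω) * r^2 := by
      filter_upwards [Ioo_mem_nhdsGT_of_mem
        (⟨le_refl (0:ℝ), half_pos hr₁pos⟩ : (0:ℝ) ∈ Ico (0:ℝ) (r₁/2))] with r hr
      obtain ⟨hr0, hrr⟩ := hr
      have hx1 : x ∈ closedBall x 1 := mem_closedBall_self zero_le_one
      have h2r0 : 0 < 2*r := by linarith
      have h2rr : 2*r < r₁ := by linarith
      have hrr₁ : r < r₁ := by linarith
      have k1 := key x hx1 (2*r) h2r0 (h2rr.trans_le hr₁r₀)
      have k2 := key x hx1 r hr0 (hrr₁.trans_le hr₁r₀)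
      have hAr := hlow x hx1 r hr0 hrr₁
      have hArpos : 0 < (μ (ball x r)).toReal := lt_of_lt_of_le (by positivity) hAr
      rw [mul_pow, mul_pow] at k1
      have hnum : |(μ (ball x (2*r))).toReal - 2^n * (μ (ball x r)).toReal| ≤
          D * (2^(n+2) + 2^n) * r^(n+2) := by
        have hd : (μ (ball x (2*r))).toReal - 2^n * (μ (ball x r)).toReal =
            ((μ (ball x (2*r))).toReal - ω * (2^n * r^n)) -
              2^n * ((μ (ball x r)).toReal - ω * r^n) := by ring
        rw [hd]
        have h2pos : (0:ℝ) < 2^n := by positivity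
        calc |((μ (ball x (2*r))).toReal - ω * (2^n * r^n)) -
              2^n * ((μ (ball x r)).toReal - ω * r^n)|
            ≤ |(μ (ball x (2*r))).toReal - ω * (2^n * r^n)| +
              |2^n * ((μ (ball x r)).toReal - ω * r^n)| := abs_sub _ _
          _ ≤ D * (2^(n+2) * r^(n+2)) + 2^n * (D * r^(n+2)) := by
              rw [abs_mul, abs_of_pos h2pos]
              exact add_le_add k1 (mul_le_mul_of_nonneg_left k2 h2pos.le)
          _ = D * (2^(n+2) + 2^n) * r^(n+2) := by ring
      have heq : (μ (ball x (2*r))).toReal / (μ (ball x r)).toReal - 2^n =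
          ((μ (ball x (2*r))).toReal - 2^n * (μ (ball x r)).toReal) /
            (μ (ball x r)).toReal := by field_simp
      rw [Real.norm_eq_abs, heq, abs_div, abs_of_pos hArpos]
      calc |(μ (ball x (2*r))).toReal - 2^n * (μ (ball x r)).toReal| /
            (μ (ball x r)).toReal
          ≤ (D * (2^(n+2) + 2^n) * r^(n+2)) / (ω / 2 * r^n) :=
            div_le_div₀ (by positivity) hnum (by positivity) hAr
        _ = (2*D*(2^(n+2)+2^n)/ω) * r^2 := by
            rw [pow_add]
            field_simp
            ring
    apply squeeze_zero_norm' hbd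
    have h0 : Tendsto (fun r : ℝ => (2*D*(2^(n+2)+2^n)/ω) * r^2) (𝓝 0) (𝓝 0) := by
      have hc : Continuous (fun r : ℝ => (2*D*(2^(n+2)+2^n)/ω) * r^2) :=
        continuous_const.mul (continuous_pow 2)
      have := hc.tendsto (0:ℝ)
      simpa using this
    exact h0.mono_left nhdsWithin_le_nhds
  · intro u hu c' hLeb
    have hbd : ∀ᶠ r in 𝓝[>] (0:ℝ), |amvOp μ u c' x r - samvOp μ u c' x r| ≤
        (K/2) * ⨍ y in ball x r, |u y - c'| ∂μ := by
      filter_upwards [Ioo_mem_nhdsGT_of_mem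
        (⟨le_refl (0:ℝ), hr₁pos⟩ : (0:ℝ) ∈ Ico (0:ℝ) r₁)] with r hr
      obtain ⟨hr0, hrr⟩ := hr
      have hr1 : r < 1 := lt_of_le_of_lt (hrr.trans_le hr₁r₀).le hr₀1
      have hcb : IsCompact (closedBall x r) :=
        hcpt.of_isClosed_subset isClosed_closedBall (closedBall_subset_closedBall hr1.le)
      have hfu : IntegrableOn u (ball x r) μ :=
        (hu.integrableOn_isCompact hcb).mono_set ball_subset_closedBall
      have hfin : μ (ball x r) < ∞ := (hμ x r hr0).2
      have hmpos : 0 < (μ (ball x r)).toReal :=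
        ENNReal.toReal_pos (hμ x r hr0).1.ne' hfin.ne
      have hf : IntegrableOn (fun y => u y - c') (ball x r) μ :=
        hfu.sub (integrableOn_const hfin.ne)
      have hgmeas : Measurable (fun y : X => (μ (ball x r)).toReal / (μ (ball y r)).toReal) :=
        measurable_const.div (measurable_measure_ball' μ r)
      have hgbound : ∀ y ∈ ball x r,
          |1 - (μ (ball x r)).toReal / (μ (ball y r)).toReal| ≤ K * r^2 :=
        fun y hy => claimK r hr0 hrr y hy
      have hgnonneg : ∀ y : X, 0 ≤ (μ (ball x r)).toReal / (μ (ball y r)).toReal :=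
        fun y => div_nonneg ENNReal.toReal_nonneg ENNReal.toReal_nonneg
      have hfg : IntegrableOn
          (fun y => (u y - c') * (1 + (μ (ball x r)).toReal / (μ (ball y r)).toReal))
          (ball x r) μ := by
        apply Integrable.mono' ((hf.norm).const_mul (2 + K*r^2))
        · exact hf.aestronglyMeasurable.mul
            (measurable_const.add hgmeas).aestronglyMeasurable
        · rw [ae_restrict_iff' measurableSet_ball]
          apply ae_of_all
          intro y hy
          have h1 := abs_le.1 (hgbound y hy)
          have h2 := hgnonneg y
          rw [norm_mul]
          calc ‖u y - c'‖ * ‖1 + (μ (ball x r)).toReal / (μ (ball y r)).toReal‖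
              ≤ ‖u y - c'‖ * (2 + K*r^2) := by
                apply mul_le_mul_of_nonneg_left _ (norm_nonneg _)
                rw [Real.norm_eq_abs, abs_of_nonneg (by linarith)]
                linarith
            _ = (2 + K*r^2) * ‖u y - c'‖ := mul_comm _ _
      have hT : (∫ y in ball x r,
            (u y - c') * (1 - (μ (ball x r)).toReal / (μ (ball y r)).toReal) ∂μ) =
          2 * (∫ y in ball x r, (u y - c') ∂μ) -
            ∫ y in ball x r,
              (u y - c') * (1 + (μ (ball x r)).toReal / (μ (ball y r)).toReal) ∂μ := by
        rw [show (fun y => (u y - c') * (1 - (μ (ball x r)).toReal / (μ (ball y r)).toReal)) =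
            fun y => 2*(u y - c') -
              (u y - c') * (1 + (μ (ball x r)).toReal / (μ (ball y r)).toReal) from
          funext fun y => by ring]
        rw [integral_sub (hf.const_mul 2) hfg, integral_const_mul]
      have hdiffeq : amvOp μ u c' x r - samvOp μ u c' x r =
          (1/(2*r^2)) * (((μ (ball x r)).toReal)⁻¹ *
            ∫ y in ball x r,
              (u y - c') * (1 - (μ (ball x r)).toReal / (μ (ball y r)).toReal) ∂μ) := by
        rw [amvOp, samvOp, setAverage_eq, setAverage_eq, smul_eq_mul, smul_eq_mul, hT, measureReal_def]
        ring
      have hTbd : |∫ y in ball x r,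
            (u y - c') * (1 - (μ (ball x r)).toReal / (μ (ball y r)).toReal) ∂μ| ≤
          (K*r^2) * ∫ y in ball x r, |u y - c'| ∂μ := by
        calc |∫ y in ball x r,
              (u y - c') * (1 - (μ (ball x r)).toReal / (μ (ball y r)).toReal) ∂μ|
            = ‖∫ y in ball x r,
              (u y - c') * (1 - (μ (ball x r)).toReal / (μ (ball y r)).toReal) ∂μ‖ :=
              (Real.norm_eq_abs _).symm
          _ ≤ ∫ y in ball x r, (K*r^2) * |u y - c'| ∂μ := by
              apply norm_integral_le_of_norm_le ((hf.abs).const_mul (K*r^2))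
              rw [ae_restrict_iff' measurableSet_ball]
              apply ae_of_all
              intro y hy
              rw [norm_mul, Real.norm_eq_abs, Real.norm_eq_abs]
              calc |u y - c'| * |1 - (μ (ball x r)).toReal / (μ (ball y r)).toReal|
                  ≤ |u y - c'| * (K*r^2) :=
                    mul_le_mul_of_nonneg_left (hgbound y hy) (abs_nonneg _)
                _ = (K*r^2) * |u y - c'| := mul_comm _ _
          _ = (K*r^2) * ∫ y in ball x r, |u y - c'| ∂μ := integral_const_mul _ _
      rw [setAverage_eq, smul_eq_mul, hdiffeq]
      rw [abs_mul, abs_mul, abs_of_pos (by positivity : (0:ℝ) < 1/(2*r^2)),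
        abs_of_nonneg (inv_nonneg.2 ENNReal.toReal_nonneg)]
      calc (1/(2*r^2)) * (((μ (ball x r)).toReal)⁻¹ *
            |∫ y in ball x r,
              (u y - c') * (1 - (μ (ball x r)).toReal / (μ (ball y r)).toReal) ∂μ|)
          ≤ (1/(2*r^2)) * (((μ (ball x r)).toReal)⁻¹ *
              ((K*r^2) * ∫ y in ball x r, |u y - c'| ∂μ)) := by
            apply mul_le_mul_of_nonneg_left _ (by positivity)
            exact mul_le_mul_of_nonneg_left hTbd (inv_nonneg.2 ENNReal.toReal_nonneg)
        _ = K/2 * (((μ (ball x r)).toReal)⁻¹ * ∫ y in ball x r, |u y - c'| ∂μ) := by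
            field_simp
    have hnonneg : ∀ᶠ r in 𝓝[>] (0:ℝ), 0 ≤ |amvOp μ u c' x r - samvOp μ u c' x r| :=
      Eventually.of_forall fun r => abs_nonneg _
    have hg0 : Tendsto (fun r => (K/2) * ⨍ y in ball x r, |u y - c'| ∂μ)
        (𝓝[>] (0:ℝ)) (𝓝 0) := by
      have := hLeb.const_mul (K/2)
      simpa using this
    exact squeeze_zero' hnonneg hbd hg0
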